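/- Let r₁, r₂ ≥ 0, κ ∈ (0,1], and define L(c) = (1+r₁)/c − r₁c/(1+r₂(1−c))². Let h₁, h₂ ∈ ℂ^M be nonzero with cos²α = |h₁ᴴh₂|²/(‖h₁‖²‖h₂‖²) ≥ κ. If ‖h₁‖²/‖h₂‖² ≥ L(κ), then the quasi-degradation inequality L(cos²α) ≤ ‖h₁‖²/‖h₂‖² holds. -/
import Mathlib


open scoped InnerProductSpace

/-- Corollary 1 of the paper: if `cos²α ≥ κ > 0` and `‖h₁‖²/‖h₂‖² ≥ L(κ)`, then the
quasi-degradation inequality `L(cos²α) ≤ ‖h₁‖²/‖h₂‖²` holds. -/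
theorem stmt_9 (M : ℕ) (r₁ r₂ κ : ℝ) (hr₁ : 0 ≤ r₁) (hr₂ : 0 ≤ r₂)
    (hκ : κ ∈ Set.Ioc (0 : ℝ) 1)
    (h₁ h₂ : EuclideanSpace ℂ (Fin M)) (hh₁ : h₁ ≠ 0) (hh₂ : h₂ ≠ 0)
    (c : ℝ) (hc : c = ‖⟪h₁, h₂⟫_ℂ‖ ^ 2 / (‖h₁‖ ^ 2 * ‖h₂‖ ^ 2)) (hcκ : κ ≤ c)
    (hdom : (1 + r₁) / κ - r₁ * κ / (1 + r₂ * (1 - κ)) ^ 2 ≤ ‖h₁‖ ^ 2 / ‖h₂‖ ^ 2) :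
    (1 + r₁) / c - r₁ * c / (1 + r₂ * (1 - c)) ^ 2 ≤ ‖h₁‖ ^ 2 / ‖h₂‖ ^ 2 := by
  obtain ⟨hκ0, hκ1⟩ := hκ
  have hc1 : c ≤ 1 := by
    rw [hc]
    have hcs : ‖⟪h₁, h₂⟫_ℂ‖ ≤ ‖h₁‖ * ‖h₂‖ := norm_inner_le_norm h₁ h₂
    have hpos : 0 < ‖h₁‖ ^ 2 * ‖h₂‖ ^ 2 := by
      have := norm_pos_iff.mpr hh₁
      have := norm_pos_iff.mpr hh₂
      positivity
    rw [div_le_one hpos]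
    calc ‖⟪h₁, h₂⟫_ℂ‖ ^ 2 ≤ (‖h₁‖ * ‖h₂‖) ^ 2 := by
          exact pow_le_pow_left₀ (norm_nonneg _) hcs 2
      _ = ‖h₁‖ ^ 2 * ‖h₂‖ ^ 2 := by ring
  have hc0 : 0 < c := lt_of_lt_of_le hκ0 hcκ
  have hdc : (0:ℝ) < 1 + r₂ * (1 - c) := by nlinarith
  have hdκ : (0:ℝ) < 1 + r₂ * (1 - κ) := by nlinarith
  have h1 : (1 + r₁) / c ≤ (1 + r₁) / κ :=
    div_le_div_of_nonneg_left (by linarith) hκ0 hcκ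
  have h2 : r₁ * κ / (1 + r₂ * (1 - κ)) ^ 2 ≤ r₁ * c / (1 + r₂ * (1 - c)) ^ 2 := by
    apply div_le_div₀ (by positivity) (by nlinarith) (by positivity)
    exact pow_le_pow_left₀ hdc.le (by nlinarith) 2
  linarith
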